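/- Let (X,d) be a metric space, S ⊆ X, f : S → ℝ a K-Lipschitz function, t > 0, L > 0, and x ∈ X with d(s,x) ≤ tL for a fixed s ∈ S. If s' ∈ S satisfies d(s,s') ≥ t(2K+2L), then (1/2)d(s',x)² − (1/2)d(s,x)² ≥ t(f(s) − f(s')). Consequently, any minimizer s' of G(s') = t f(s') + (1/2)d(s',x)² with G(s') < G(s) satisfies d(s,s') < t(2K+2L). -/
import Mathlib


/-- If `f : S → ℝ` is `K`-Lipschitz on `S ⊆ X`, `t, L > 0`, `s ∈ S`,
`dist s x ≤ t L`, then any `s' ∈ S` with `dist s s' ≥ t(2K+2L)` satisfies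
`½ d(s',x)² − ½ d(s,x)² ≥ t (f(s) − f(s'))`; consequently any minimizer `s'` of
`G(s') = t f(s') + ½ d(s',x)²` with `G(s') < G(s)` satisfies `dist s s' < t(2K+2L)`. -/
theorem stmt2 {X : Type*} [MetricSpace X] (S : Set X) (f : X → ℝ) (K t L : ℝ)
    (hK : 0 ≤ K) (ht : 0 < t) (hL : 0 < L)
    (hf : ∀ a ∈ S, ∀ b ∈ S, |f a - f b| ≤ K * dist a b)
    (s : X) (hs : s ∈ S) (x : X) (hx : dist s x ≤ t * L) :
    (∀ s' ∈ S, t * (2 * K + 2 * L) ≤ dist s s' →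
      t * (f s - f s') ≤ (1/2) * dist s' x ^ 2 - (1/2) * dist s x ^ 2) ∧
    (∀ s' ∈ S, t * f s' + (1/2) * dist s' x ^ 2 < t * f s + (1/2) * dist s x ^ 2 →
      dist s s' < t * (2 * K + 2 * L)) := by
  have key : ∀ s' ∈ S, t * (2 * K + 2 * L) ≤ dist s s' →
      t * (f s - f s') ≤ (1/2) * dist s' x ^ 2 - (1/2) * dist s x ^ 2 := by
    intro s' hs' hD
    have hlip := (abs_le.mp (hf s hs s' hs')).2
    have htri : dist s s' - dist s x ≤ dist s' x := by
      have := dist_triangle s x s'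
      have h1 : dist x s' = dist s' x := dist_comm x s'
      linarith
    have h0 : 0 ≤ dist s x := dist_nonneg
    have h1 : 0 ≤ dist s' x := dist_nonneg
    have h2 : t * L ≤ dist s s' := by nlinarith
    have h3 : 0 ≤ dist s s' - dist s x := by linarith
    have h4 : (dist s s' - dist s x)^2 ≤ dist s' x ^ 2 := by nlinarith
    have h5 : t * (f s - f s') ≤ t * K * dist s s' := by nlinarith
    nlinarith [mul_le_mul_of_nonneg_left hx (le_trans (mul_nonneg ht.le hL.le) h2),
      mul_nonneg ht.le hK, mul_nonneg ht.le hL.le, sq_nonneg (dist s s')]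
  refine ⟨key, fun s' hs' hG => ?_⟩
  by_contra h
  push_neg at h
  have := key s' hs' h
  linarith
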